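/- Let Σ be a finite type, X ⊆ (ℤ → Σ) a subshift, G a group acting on a finite type A, and N a subgroup of G satisfying ⁅⊤, N⁆ = N (so N is contained in the hypocenter of G). Then for every g ∈ N and every subset C ⊆ X that is clopen in the subspace topology of X, the bijection ctrl(g, C) of X × A belongs to P(X, G). -/

import Mathlib

open Function

/-- The shift map on `ℤ → A`. -/
def shiftMap (A : Type*) : (ℤ → A) → (ℤ → A) := fun x i => x (i + 1)

/-- The shift map as a permutation of `ℤ → A`. -/
def shiftPerm (A : Type*) : Equiv.Perm (ℤ → A) where
  toFun := shiftMap A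
  invFun x i := x (i - 1)
  left_inv x := funext fun i => by simp [shiftMap]
  right_inv x := funext fun i => by simp [shiftMap]

/-- Finite types carry the discrete topology. -/
instance fintypeDiscreteTopology (A : Type*) [Fintype A] : TopologicalSpace A := ⊥

/-- The automorphism group of the full shift `A^ℤ`: shift-commuting self-homeomorphisms of
`ℤ → A`, as a subgroup of the permutation group of `ℤ → A`. -/
def FullShiftAut (A : Type*) [Fintype A] : Subgroup (Equiv.Perm (ℤ → A)) where
  carrier := { f | Continuous ⇑f ∧ Continuous ⇑f.symm ∧
      ∀ x, f (shiftMap A x) = shiftMap A (f x) }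
  one_mem' := ⟨continuous_id, continuous_id, fun _ => rfl⟩
  mul_mem' := by
    rintro f g ⟨hf1, hf2, hf3⟩ ⟨hg1, hg2, hg3⟩
    refine ⟨?_, ?_, fun x => ?_⟩
    · exact hf1.comp hg1
    · exact hg2.comp hf2
    · show f (g (shiftMap A x)) = shiftMap A (f (g x))
      rw [hg3, hf3]
  inv_mem' := by
    rintro f ⟨hf1, hf2, hf3⟩
    refine ⟨hf2, hf1, fun x => ?_⟩
    apply f.injective
    rw [hf3]; simp

/-- The symbol permutation determined by a permutation of the alphabet. -/
def symbolPerm {A : Type*} (π : Equiv.Perm A) : Equiv.Perm (ℤ → A) :=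
  Equiv.piCongrRight fun _ => π

/-- The partial shift on the first track. -/
def partialShift₁ (B C : Type*) : Equiv.Perm (ℤ → B × C) where
  toFun x i := ((x (i + 1)).1, (x i).2)
  invFun x i := ((x (i - 1)).1, (x i).2)
  left_inv x := funext fun i => by simp
  right_inv x := funext fun i => by simp

/-- The partial shift on the second track. -/
def partialShift₂ (B C : Type*) : Equiv.Perm (ℤ → B × C) where
  toFun x i := ((x i).1, (x (i + 1)).2)
  invFun x i := ((x i).1, (x (i - 1)).2)
  left_inv x := funext fun i => by simp
  right_inv x := funext fun i => by simp

/-- `PAut[B;C]`: the subgroup of the automorphism group of `(B × C)^ℤ` generated by the two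
partial shifts and all symbol permutations. -/
def PAut (B C : Type*) : Subgroup (Equiv.Perm (ℤ → B × C)) :=
  Subgroup.closure
    ({partialShift₁ B C, partialShift₂ B C} ∪ Set.range (symbolPerm (A := B × C)))

attribute [local instance] Classical.propDecidable

/-- The shift on `X × A`, where `X ⊆ ℤ → S` is shift-invariant: `ŝ(x, a) = (σ x, a)`. -/
noncomputable def shiftSub {S : Type*} (X : Set (ℤ → S)) (hX : shiftMap S '' X = X)
    (A : Type*) : Equiv.Perm (↥X × A) :=
  ((shiftPerm S).subtypeEquiv (p := (· ∈ X)) (q := (· ∈ X)) (fun x => by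
    constructor
    · intro hx
      have : shiftMap S x ∈ shiftMap S '' X := ⟨x, hx, rfl⟩
      rw [hX] at this; exact this
    · intro hx
      rw [← hX] at hx
      obtain ⟨y, hy, hxy⟩ := hx
      have : y = x := (shiftPerm S).injective (show shiftPerm S y = shiftPerm S x from hxy)
      exact this ▸ hy)).prodCongr (Equiv.refl A)

/-- The controlled action `ctrl(g, C)` on `X × A`: apply `g` on the second coordinate exactly
when the first coordinate lies in `C`. -/
noncomputable def ctrlSub {S : Type*} (X : Set (ℤ → S)) {G : Type*} [Group G] {A : Type*}
    [MulAction G A] (g : G) (C : Set ↥X) : Equiv.Perm (↥X × A) where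
  toFun p := if p.1 ∈ C then (p.1, g • p.2) else p
  invFun p := if p.1 ∈ C then (p.1, g⁻¹ • p.2) else p
  left_inv := by rintro ⟨x, a⟩; by_cases h : x ∈ C <;> simp [h]
  right_inv := by rintro ⟨x, a⟩; by_cases h : x ∈ C <;> simp [h]

/-- The group `P(X, G)`: generated by the shift on `X × A` together with the controlled maps
`ctrl(g, C)` over basic cylinders `C`. -/
noncomputable def PGroup {S : Type*} (X : Set (ℤ → S)) (hX : shiftMap S '' X = X)
    (G : Type*) [Group G] (A : Type*) [MulAction G A] : Subgroup (Equiv.Perm (↥X × A)) :=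
  Subgroup.closure
    ({shiftSub X hX A} ∪
      {f | ∃ (g : G) (i : ℤ) (s : S), f = ctrlSub X g {x : ↥X | (x : ℤ → S) i = s}})

section Aux

variable {S : Type} [Fintype S] {X : Set (ℤ → S)} {G : Type} [Group G] {A : Type}
  [MulAction G A]

lemma ctrl_apply (g : G) (C : Set ↥X) (p : ↥X × A) :
    ctrlSub (A := A) X g C p = if p.1 ∈ C then (p.1, g • p.2) else p := rfl

lemma ctrl_mul (g h : G) (C : Set ↥X) :
    ctrlSub (A := A) X g C * ctrlSub X h C = ctrlSub X (g * h) C := by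
  apply Equiv.ext
  rintro ⟨x, a⟩
  by_cases hx : x ∈ C <;> simp [Equiv.Perm.mul_apply, ctrl_apply, hx, mul_smul]

lemma ctrl_one (C : Set ↥X) : ctrlSub (A := A) X (1 : G) C = 1 := by
  apply Equiv.ext
  rintro ⟨x, a⟩
  by_cases hx : x ∈ C <;> simp [ctrl_apply, hx]

lemma ctrl_inv (g : G) (C : Set ↥X) :
    (ctrlSub (A := A) X g C)⁻¹ = ctrlSub X g⁻¹ C := by
  apply inv_eq_of_mul_eq_one_right
  rw [ctrl_mul, mul_inv_cancel, ctrl_one]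

lemma ctrl_empty (g : G) : ctrlSub (A := A) X g (∅ : Set ↥X) = 1 := by
  apply Equiv.ext
  rintro ⟨x, a⟩
  simp [ctrl_apply]

lemma ctrl_union (g : G) {C D : Set ↥X} (h : Disjoint C D) :
    ctrlSub (A := A) X g (C ∪ D) = ctrlSub X g C * ctrlSub X g D := by
  apply Equiv.ext
  rintro ⟨x, a⟩
  by_cases hx : x ∈ C
  · have hx' : x ∉ D := fun hd => Set.disjoint_left.mp h hx hd
    simp [Equiv.Perm.mul_apply, ctrl_apply, hx, hx']
  · by_cases hx' : x ∈ D <;>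
      simp [Equiv.Perm.mul_apply, ctrl_apply, hx, hx']

open scoped commutatorElement in
lemma ctrl_commutator (h k : G) (C D : Set ↥X) :
    ⁅ctrlSub (A := A) X h C, ctrlSub (A := A) X k D⁆ = ctrlSub X ⁅h, k⁆ (C ∩ D) := by
  rw [commutatorElement_def, commutatorElement_def, ctrl_inv, ctrl_inv]
  apply Equiv.ext
  rintro ⟨x, a⟩
  by_cases hx : x ∈ C <;> by_cases hx' : x ∈ D <;>
    simp [Equiv.Perm.mul_apply, ctrl_apply, hx, hx', mul_smul]

variable (hX : shiftMap S '' X = X)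

lemma ctrl_cyl_mem (g : G) (i : ℤ) (s : S) :
    ctrlSub (A := A) X g {x : ↥X | (x : ℤ → S) i = s} ∈ PGroup X hX G A :=
  Subgroup.subset_closure (Or.inr ⟨g, i, s, rfl⟩)

lemma ctrl_biUnion_mem {ι : Type*} (T : Finset ι) (Cs : ι → Set ↥X)
    (hdisj : ∀ i ∈ T, ∀ j ∈ T, i ≠ j → Disjoint (Cs i) (Cs j)) (g : G)
    (h : ∀ i ∈ T, ctrlSub (A := A) X g (Cs i) ∈ PGroup X hX G A) :
    ctrlSub (A := A) X g (⋃ i ∈ T, Cs i) ∈ PGroup X hX G A := by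
  classical
  induction T using Finset.induction with
  | empty => simpa [ctrl_empty] using Subgroup.one_mem _
  | @insert a T ha ih =>
    have : (⋃ i ∈ insert a T, Cs i) = Cs a ∪ ⋃ i ∈ T, Cs i := by
      simp [Set.biUnion_insert]
    rw [this, ctrl_union]
    · exact Subgroup.mul_mem _ (h a (Finset.mem_insert_self a T))
        (ih (fun i hi j hj hij => hdisj i (Finset.mem_insert_of_mem hi) j
          (Finset.mem_insert_of_mem hj) hij)
          (fun i hi => h i (Finset.mem_insert_of_mem hi)))
    · rw [Set.disjoint_left]
      intro x hxa hx
      rw [Set.mem_iUnion₂] at hx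
      obtain ⟨i, hi, hxi⟩ := hx
      have : a ≠ i := fun e => ha (e ▸ hi)
      exact Set.disjoint_left.mp (hdisj a (Finset.mem_insert_self a T) i
        (Finset.mem_insert_of_mem hi) this) hxa hxi

lemma ctrl_univ_mem (g : G) :
    ctrlSub (A := A) X g (Set.univ : Set ↥X) ∈ PGroup X hX G A := by
  have huniv : (Set.univ : Set ↥X) =
      ⋃ s ∈ (Finset.univ : Finset S), {x : ↥X | (x : ℤ → S) 0 = s} := by
    ext x
    simp
  rw [huniv]
  apply ctrl_biUnion_mem
  · intro s _ t _ hst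
    rw [Set.disjoint_left]
    intro x hxs hxt
    exact hst (hxs.symm.trans hxt)
  · intro s _
    exact ctrl_cyl_mem hX g 0 s

lemma ctrl_inter_mem {N : Subgroup G} (hN : ⁅(⊤ : Subgroup G), N⁆ = N)
    (C D : Set ↥X) (hC : ∀ h : G, ctrlSub (A := A) X h C ∈ PGroup X hX G A)
    (hD : ∀ k ∈ N, ctrlSub (A := A) X k D ∈ PGroup X hX G A) :
    ∀ g ∈ N, ctrlSub (A := A) X g (C ∩ D) ∈ PGroup X hX G A := by
  intro g hg
  rw [← hN, Subgroup.commutator_def] at hg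
  refine Subgroup.closure_induction ?_ ?_ ?_ ?_ hg
  · rintro x ⟨p, -, q, hq, rfl⟩
    rw [← ctrl_commutator, commutatorElement_def]
    exact Subgroup.mul_mem _ (Subgroup.mul_mem _ (Subgroup.mul_mem _ (hC p) (hD q hq))
      (Subgroup.inv_mem _ (hC p))) (Subgroup.inv_mem _ (hD q hq))
  · rw [ctrl_one]; exact Subgroup.one_mem _
  · intro x y _ _ hx hy
    rw [← ctrl_mul]; exact Subgroup.mul_mem _ hx hy
  · intro x _ hx
    rw [← ctrl_inv]; exact Subgroup.inv_mem _ hx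

lemma ctrl_box_mem {N : Subgroup G} (hN : ⁅(⊤ : Subgroup G), N⁆ = N)
    (F : Finset ℤ) (w : ℤ → S) :
    ∀ g ∈ N, ctrlSub (A := A) X g {y : ↥X | ∀ i ∈ F, (y : ℤ → S) i = w i}
      ∈ PGroup X hX G A := by
  classical
  induction F using Finset.induction with
  | empty =>
    intro g hg
    have : {y : ↥X | ∀ i ∈ (∅ : Finset ℤ), (y : ℤ → S) i = w i} = Set.univ := by
      ext y; simp
    rw [this]
    exact ctrl_univ_mem hX g
  | @insert a F ha ih =>
    have : {y : ↥X | ∀ i ∈ insert a F, (y : ℤ → S) i = w i} =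
        {y : ↥X | (y : ℤ → S) a = w a} ∩ {y : ↥X | ∀ i ∈ F, (y : ℤ → S) i = w i} := by
      ext y
      simp [Finset.forall_mem_insert]
    rw [this]
    exact ctrl_inter_mem hX hN _ _ (fun h => ctrl_cyl_mem hX h a (w a)) ih

end Aux

section Window

variable {S : Type} [Fintype S] {X : Set (ℤ → S)}

instance : DiscreteTopology S := ⟨rfl⟩

lemma exists_window (hXclosed : IsClosed X) (C : Set ↥X) (hC : IsClopen C) :
    ∃ F : Finset ℤ, ∀ x y : ↥X,
      (∀ i ∈ F, (x : ℤ → S) i = (y : ℤ → S) i) → (x ∈ C ↔ y ∈ C) := by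
  classical
  haveI : CompactSpace ↥X := isCompact_iff_compactSpace.mp hXclosed.isCompact
  set U : ↥X → Set ↥X := fun x => if x ∈ C then C else Cᶜ with hU
  have hxU : ∀ x : ↥X, x ∈ U x := by
    intro x
    by_cases hx : x ∈ C <;> simp [hU, hx]
  have hUopen : ∀ x : ↥X, IsOpen (U x) := by
    intro x
    by_cases hx : x ∈ C <;> simp only [hU, hx, if_true, if_false]
    · exact hC.2
    · exact hC.1.isOpen_compl
  have key : ∀ x : ↥X, ∃ Fx : Finset ℤ,
      {y : ↥X | ∀ i ∈ Fx, (y : ℤ → S) i = (x : ℤ → S) i} ⊆ U x := by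
    intro x
    have hopen := hUopen x
    rw [isOpen_induced_iff] at hopen
    obtain ⟨O, hO, hOU⟩ := hopen
    have hxO : (x : ℤ → S) ∈ O := by
      have := hxU x
      rw [← hOU] at this
      exact this
    obtain ⟨I, u, hu, hsub⟩ := isOpen_pi_iff.mp hO (x : ℤ → S) hxO
    refine ⟨I, fun y hy => ?_⟩
    rw [← hOU]
    apply hsub
    intro i hi
    rw [Set.mem_setOf_eq] at hy
    rw [hy i hi]
    exact (hu i hi).2
  choose Fx hFx using key
  set V : ↥X → Set ↥X := fun x => {y : ↥X | ∀ i ∈ Fx x, (y : ℤ → S) i = (x : ℤ → S) i}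
    with hV
  have hVopen : ∀ x : ↥X, IsOpen (V x) := by
    intro x
    have : V x = Subtype.val ⁻¹'
        (⋂ i ∈ Fx x, (fun z : ℤ → S => z i) ⁻¹' {(x : ℤ → S) i}) := by
      ext y
      simp [hV]
    rw [this]
    refine Continuous.isOpen_preimage continuous_subtype_val _ ?_
    exact isOpen_biInter_finset fun i _ =>
      (continuous_apply i).isOpen_preimage _ (isOpen_discrete _)
  have hcov : (Set.univ : Set ↥X) ⊆ ⋃ x : ↥X, V x := by
    intro x _
    exact Set.mem_iUnion.mpr ⟨x, fun i _ => rfl⟩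
  obtain ⟨t, ht⟩ := isCompact_univ.elim_finite_subcover V hVopen hcov
  refine ⟨t.biUnion Fx, fun x y hxy => ?_⟩
  obtain ⟨z, hz, hxz⟩ : ∃ z ∈ t, x ∈ V z := by
    have := ht (Set.mem_univ x)
    rw [Set.mem_iUnion₂] at this
    obtain ⟨z, hz, hxz⟩ := this
    exact ⟨z, hz, hxz⟩
  have hyz : y ∈ V z := by
    intro i hi
    rw [← hxy i (Finset.mem_biUnion.mpr ⟨z, hz, hi⟩)]
    exact hxz i hi
  have hxUz : x ∈ U z := hFx z hxz
  have hyUz : y ∈ U z := hFx z hyz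
  by_cases hzC : z ∈ C
  · simp only [hU, hzC, if_true] at hxUz hyUz
    exact iff_of_true hxUz hyUz
  · simp only [hU, hzC, if_false] at hxUz hyUz
    exact iff_of_false hxUz hyUz

end Window

/-- for a subgroup `N` of `G` with `⁅⊤, N⁆ = N` (so `N` is contained in the
hypocenter of `G`), every `ctrl(g, C)` with `g ∈ N` and `C ⊆ X` clopen lies in `P(X, G)`. -/
theorem stmt6 (S : Type) [Fintype S] (X : Set (ℤ → S))
    (hXclosed : IsClosed X) (hX : shiftMap S '' X = X)
    (G : Type) [Group G] (A : Type) [Fintype A] [MulAction G A]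
    (N : Subgroup G) (hN : ⁅(⊤ : Subgroup G), N⁆ = N)
    (g : G) (hg : g ∈ N) (C : Set ↥X) (hC : IsClopen C) :
    ctrlSub X g C ∈ PGroup X hX G A := by
  classical
  obtain ⟨F, hF⟩ := exists_window hXclosed C hC
  by_cases hCe : C = ∅
  · rw [hCe, ctrl_empty]
    exact Subgroup.one_mem _
  obtain ⟨x₀, hx₀⟩ := Set.nonempty_iff_ne_empty.mpr hCe
  set s₀ : S := (x₀ : ℤ → S) 0 with hs₀
  set pat : ↥X → (ℤ → S) := fun x i => if i ∈ F then (x : ℤ → S) i else s₀ with hpat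
  set W : Set (ℤ → S) := pat '' C with hW
  have hWfin : W.Finite := by
    have hinj : Set.InjOn (fun w : ℤ → S => fun i : ↥F => w i) W := by
      rintro w ⟨x, -, rfl⟩ w' ⟨x', -, rfl⟩ h
      funext i
      by_cases hi : i ∈ F
      · exact congrFun h ⟨i, hi⟩
      · simp [hpat, hi]
    exact Set.Finite.of_finite_image (Set.toFinite _) hinj
  have hClosC : C = ⋃ w ∈ hWfin.toFinset, {y : ↥X | ∀ i ∈ F, (y : ℤ → S) i = w i} := by
    ext y
    simp only [Set.mem_iUnion₂, Set.Finite.mem_toFinset]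
    constructor
    · intro hy
      refine ⟨pat y, ⟨y, hy, rfl⟩, fun i hi => ?_⟩
      simp [hpat, hi]
    · rintro ⟨w, ⟨x, hx, rfl⟩, hyw⟩
      refine (hF x y fun i hi => ?_).mp hx
      rw [hyw i hi]
      simp [hpat, hi]
  rw [hClosC]
  apply ctrl_biUnion_mem
  · intro w hw w' hw' hne
    rw [Set.Finite.mem_toFinset] at hw hw'
    rw [Set.disjoint_left]
    intro y hyw hyw'
    apply hne
    obtain ⟨x, -, rfl⟩ := hw
    obtain ⟨x', -, rfl⟩ := hw'
    funext i
    by_cases hi : i ∈ F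
    · have h1 : (y : ℤ → S) i = pat x i := hyw i hi
      have h2 : (y : ℤ → S) i = pat x' i := hyw' i hi
      exact h1.symm.trans h2
    · simp [hpat, hi]
  · intro w _
    exact ctrl_box_mem hX hN F w g hg
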